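/- Let r be a normal separator path and let p be any path from S to T in G. Then p visits at least one inner vertex of r. -/

import Mathlib

open SimpleGraph

namespace NSP

variable {V : Type*}

/-- A chordal graph: every cycle with at least four vertices has a chord,
i.e. an edge not on the cycle joining two vertices of the cycle. -/
def Chordal (G : SimpleGraph V) : Prop :=
  ∀ ⦃v : V⦄ (c : G.Walk v v), c.IsCycle → 4 ≤ c.length →
    ∃ u w : V, u ∈ c.support ∧ w ∈ c.support ∧ G.Adj u w ∧ s(u, w) ∉ c.edges

/-- A path in `G`, given as a nonempty list of vertices with consecutive
vertices adjacent. -/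
def IsPathSeq (G : SimpleGraph V) (p : List V) : Prop :=
  p ≠ [] ∧ p.Chain' G.Adj

/-- A simple path: a path all of whose vertices are distinct. -/
def IsSimpleSeq (G : SimpleGraph V) (p : List V) : Prop :=
  IsPathSeq G p ∧ p.Nodup

/-- The set of edges of a path sequence. -/
def edgesOf (p : List V) : Set (Sym2 V) :=
  {e | ∃ (i : ℕ) (h : i + 1 < p.length),
    e = s(p.get ⟨i, by omega⟩, p.get ⟨i + 1, h⟩)}

/-- A set of edges is separating if deleting it from `G` leaves a
disconnected graph. -/
def Separating (G : SimpleGraph V) (D : Set (Sym2 V)) : Prop :=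
  ¬ (G.deleteEdges D).Connected

/-- A path is separating if its edge set is separating. -/
def SeparatingPath (G : SimpleGraph V) (p : List V) : Prop :=
  Separating G (edgesOf p)

/-- The contiguous subpath `p_{i,j} = p_i → ⋯ → p_j`. -/
def subseq (p : List V) (i j : ℕ) : List V :=
  (p.take (j + 1)).drop i

/-- `q` is a contiguous subpath of `p`. -/
def ContigSub (q p : List V) : Prop :=
  ∃ i j : ℕ, i ≤ j ∧ j < p.length ∧ q = subseq p i j

/-- A separator path: a simple separating path that does not properly contain
(as a contiguous subpath) a separating path. -/
def SeparatorPath (G : SimpleGraph V) (p : List V) : Prop :=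
  IsSimpleSeq G p ∧ SeparatingPath G p ∧
    ∀ q : List V, ContigSub q p → q ≠ p → ¬ SeparatingPath G q

/-- `u` and `v` are weakly `p`-connected: some path between `u` and `v`
shares no edge with `p`. -/
def WeaklyConn (G : SimpleGraph V) (p : List V) (u v : V) : Prop :=
  ∃ q : List V, IsPathSeq G q ∧ q.head? = some u ∧ q.getLast? = some v ∧
    edgesOf q ∩ edgesOf p = ∅

/-- `u` and `v` are strongly `p`-connected: some path between `u` and `v`
shares no edge with `p` and, except at its endpoints, no vertex with `p`. -/
def StronglyConn (G : SimpleGraph V) (p : List V) (u v : V) : Prop :=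
  ∃ q : List V, IsPathSeq G q ∧ q.head? = some u ∧ q.getLast? = some v ∧
    edgesOf q ∩ edgesOf p = ∅ ∧
    ∀ (i : ℕ) (h : i < q.length), 0 < i → i + 1 < q.length → q.get ⟨i, h⟩ ∉ p

/-- A path `r` is traversable if some simple path from `S` to `T` contains
`r` as a contiguous subpath. -/
def Traversable (G : SimpleGraph V) (S T : V) (r : List V) : Prop :=
  ∃ p : List V, IsSimpleSeq G p ∧ p.head? = some S ∧ p.getLast? = some T ∧
    ContigSub r p

/-- A bad vertex: the middle vertex of a traversable separator path with
exactly two edges. -/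
def BadVertex (G : SimpleGraph V) (S T : V) (v : V) : Prop :=
  ∃ r : List V, SeparatorPath G r ∧ Traversable G S T r ∧ r.length = 3 ∧
    r[1]? = some v

/-- A separator path is useful if each two-edge segment is shorter than the
corresponding chord. -/
def Useful (w : Sym2 V → ℝ) (r : List V) : Prop :=
  ∀ (i : ℕ) (h : i + 2 < r.length),
    w s(r.get ⟨i, by omega⟩, r.get ⟨i + 1, by omega⟩) +
      w s(r.get ⟨i + 1, by omega⟩, r.get ⟨i + 2, h⟩) <
      w s(r.get ⟨i, by omega⟩, r.get ⟨i + 2, h⟩)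

/-- A normal separator path: traversable, useful, and with more than two
edges (i.e. at least four vertices). -/
def NormalSep (G : SimpleGraph V) (w : Sym2 V → ℝ) (S T : V) (r : List V) : Prop :=
  SeparatorPath G r ∧ Traversable G S T r ∧ Useful w r ∧ 3 < r.length

/-- `v` is an inner vertex of `r` (a vertex of `r` other than its endpoints). -/
def InnerMem (r : List V) (v : V) : Prop :=
  ∃ (i : ℕ) (h : i < r.length), 0 < i ∧ i + 1 < r.length ∧ r.get ⟨i, h⟩ = v

/-- The total length of a path with respect to edge lengths `w`. -/
def pathLength (w : Sym2 V → ℝ) (p : List V) : ℝ :=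
  ((p.zip p.tail).map fun q => w s(q.1, q.2)).sum

/-- All edges of `G` have positive length. -/
def EdgePos (G : SimpleGraph V) (w : Sym2 V → ℝ) : Prop :=
  ∀ e ∈ G.edgeSet, 0 < w e

/-- The subgraph of `G` formed by the edges of `D` together with their
endpoints. -/
def edgeSubgraph (G : SimpleGraph V) (D : Set (Sym2 V)) : G.Subgraph where
  verts := {v | ∃ e ∈ D ∩ G.edgeSet, v ∈ e}
  Adj u v := s(u, v) ∈ D ∧ G.Adj u v
  adj_sub h := h.2
  edge_vert {v w} h := ⟨s(v, w), ⟨h.1, h.2⟩, Sym2.mem_mk_left v w⟩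
  symm := ⟨fun u v h => by
    obtain ⟨h1, h2⟩ := h
    exact ⟨by rwa [Sym2.eq_swap], h2.symm⟩⟩

/-- For a simple path `P₀` in `G` and indices `i ≤ j < |P₀|`: in the graph
obtained by deleting the edges of `P₀` from `G`, vertices `P₀ₖ`
(`i ≤ k ≤ j`) of equal parity of index are in a common connected component,
while those of different parity are in different connected components. -/
def OddEvenSplit (G : SimpleGraph V) (P0 : List V) (i j : ℕ)
    (hj : j < P0.length) : Prop :=
  (∀ (k l : ℕ) (hik : i ≤ k) (hkj : k ≤ j) (hil : i ≤ l) (hlj : l ≤ j),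
      k % 2 = l % 2 →
      (G.deleteEdges (edgesOf P0)).Reachable
        (P0.get ⟨k, by omega⟩) (P0.get ⟨l, by omega⟩)) ∧
  (∀ (k l : ℕ) (hik : i ≤ k) (hkj : k ≤ j) (hil : i ≤ l) (hlj : l ≤ j),
      k % 2 ≠ l % 2 →
      ¬ (G.deleteEdges (edgesOf P0)).Reachable
        (P0.get ⟨k, by omega⟩) (P0.get ⟨l, by omega⟩))


-- ===== auxiliary development =====


lemma edge_mem_of_length_one {G : SimpleGraph V} {u w : V} (p : G.Walk u w)
    (h1 : p.length = 1) : s(u, w) ∈ p.edges := by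
  cases p with
  | nil => simp at h1
  | cons h q =>
    have : q.length = 0 := by simpa using h1
    have hw := SimpleGraph.Walk.eq_of_length_eq_zero this
    subst hw
    simp [Walk.edges_cons]

lemma length_dropUntil_lt [DecidableEq V] {G : SimpleGraph V} {a b w : V}
    (P : G.Walk a b) (hw : w ∈ P.support) (hne : w ≠ a) :
    (P.dropUntil w hw).length < P.length := by
  have hspec := congrArg Walk.length (P.take_spec hw)
  rw [Walk.length_append] at hspec
  have h1 : (P.takeUntil w hw).length ≠ 0 := by
    intro h0
    exact hne (Walk.eq_of_length_eq_zero h0).symm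
  omega

/-- Shortcut a walk along a chord. -/
lemma shortcut [DecidableEq V] {G : SimpleGraph V} {a b u w : V}
    (P : G.Walk a b) (hu : u ∈ P.support) (hw : w ∈ P.support)
    (hadj : G.Adj u w) (hne : s(u, w) ∉ P.edges) :
    ∃ Q : G.Walk a b, (∀ v ∈ Q.support, v ∈ P.support) ∧ Q.length < P.length := by
  classical
  set t := P.takeUntil u hu with ht
  set d := P.dropUntil u hu with hd
  have hlen : t.length + d.length = P.length := by
    have := congrArg Walk.length (P.take_spec hu)
    rwa [Walk.length_append] at this
  by_cases hwd : w ∈ d.support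
  · -- w after u
    have hlen2 : (d.takeUntil w hwd).length + (d.dropUntil w hwd).length = d.length := by
      have := congrArg Walk.length (d.take_spec hwd)
      rwa [Walk.length_append] at this
    have htw1 : (d.takeUntil w hwd).length ≠ 0 := by
      intro h0; exact hadj.ne (Walk.eq_of_length_eq_zero h0)
    have htw2 : (d.takeUntil w hwd).length ≠ 1 := by
      intro h1
      have := edge_mem_of_length_one (d.takeUntil w hwd) h1
      have : s(u, w) ∈ d.edges := (Walk.edges_takeUntil_subset d hwd) this
      exact hne ((Walk.edges_dropUntil_subset P hu) this)
    refine ⟨t.append (Walk.cons hadj (d.dropUntil w hwd)), ?_, ?_⟩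
    · intro v hv
      rw [Walk.support_append] at hv
      rcases List.mem_append.mp hv with h | h
      · exact (Walk.support_takeUntil_subset P hu) h
      · have h' : v ∈ (Walk.cons hadj (d.dropUntil w hwd)).support := List.mem_of_mem_tail h
        rw [Walk.support_cons] at h'
        rcases List.mem_cons.mp h' with h' | h'
        · exact h' ▸ hu
        · exact (Walk.support_dropUntil_subset P hu)
            ((Walk.support_dropUntil_subset d hwd) h')
    · rw [Walk.length_append, Walk.length_cons]
      omega
  · -- w in the take part
    have hwt : w ∈ t.support := by
      have hsp := congrArg Walk.support (P.take_spec hu)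
      rw [Walk.support_append] at hsp
      rw [← hsp] at hw
      rcases List.mem_append.mp hw with h | h
      · exact h
      · exact absurd (List.mem_of_mem_tail h) hwd
    have hlen2 : (t.takeUntil w hwt).length + (t.dropUntil w hwt).length = t.length := by
      have := congrArg Walk.length (t.take_spec hwt)
      rwa [Walk.length_append] at this
    have htw1 : (t.dropUntil w hwt).length ≠ 0 := by
      intro h0; exact hadj.ne (Walk.eq_of_length_eq_zero h0).symm
    have htw2 : (t.dropUntil w hwt).length ≠ 1 := by
      intro h1
      have hm := edge_mem_of_length_one (t.dropUntil w hwt) h1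
      rw [Sym2.eq_swap] at hm
      have : s(u, w) ∈ t.edges := (Walk.edges_dropUntil_subset t hwt) hm
      exact hne ((Walk.edges_takeUntil_subset P hu) this)
    refine ⟨(t.takeUntil w hwt).append (Walk.cons hadj.symm d), ?_, ?_⟩
    · intro v hv
      rw [Walk.support_append] at hv
      rcases List.mem_append.mp hv with h | h
      · exact (Walk.support_takeUntil_subset P hu)
          ((Walk.support_takeUntil_subset t hwt) h)
      · have h' : v ∈ (Walk.cons hadj.symm d).support := List.mem_of_mem_tail h
        rw [Walk.support_cons] at h'
        rcases List.mem_cons.mp h' with h' | h'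
        · exact h' ▸ hw
        · exact (Walk.support_dropUntil_subset P hu) h'
    · rw [Walk.length_append, Walk.length_cons]
      omega






lemma omega1 {G : SimpleGraph V} (hch : Chordal G) (Dset : Set (Sym2 V))
    {x0 x1 y0 y1 : V}
    (hx01 : G.Adj x0 x1) (hy01 : G.Adj y0 y1)
    (harr0 : ∀ z, s(x0, z) ∈ Dset → z = x1)
    (harr1 : ∀ z, s(y1, z) ∈ Dset → z = y0)
    (hneA : y1 ≠ x0) (hneB : x1 ≠ y0) :
    ∀ (n : ℕ) (A : G.Walk y1 x0) (B : G.Walk x1 y0),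
      A.length + B.length ≤ n →
      A.IsPath → B.IsPath →
      (∀ v ∈ A.support, (G.deleteEdges Dset).Reachable x0 v) →
      (∀ v ∈ B.support, (G.deleteEdges Dset).Reachable x1 v) →
      (∀ v ∈ A.support, v = x0 ∨ v = y1 ∨ ∀ z, s(v, z) ∉ Dset) →
      ¬ (G.deleteEdges Dset).Reachable x0 x1 →
      False := by
  classical
  intro n
  induction n with
  | zero =>
    intro A B hlen _ _ _ _ _ _
    have : A.length = 0 := by omega
    exact hneA (Walk.eq_of_length_eq_zero this)
  | succ n ih =>
    intro A B hlen hApath hBpath hA hB hfree hsep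
    set K := G.deleteEdges Dset with hK
    have hKadj : ∀ {a b : V}, G.Adj a b → s(a, b) ∉ Dset → K.Reachable a b := by
      intro a b h1 h2
      exact SimpleGraph.Adj.reachable (by rw [hK, SimpleGraph.deleteEdges_adj]; exact ⟨h1, h2⟩)
    -- disjointness of supports
    have hAB : ∀ v, v ∈ A.support → v ∈ B.support → False := by
      intro v ha hb
      exact hsep ((hA v ha).trans (hB v hb).symm)
    have hx0A : x0 ∈ A.support := Walk.end_mem_support _
    have hy1A : y1 ∈ A.support := Walk.start_mem_support _
    have hx1B : x1 ∈ B.support := Walk.start_mem_support _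
    have hy0B : y0 ∈ B.support := Walk.end_mem_support _
    have hA1 : A.length ≠ 0 := fun h0 => hneA (Walk.eq_of_length_eq_zero h0)
    have hB1 : B.length ≠ 0 := fun h0 => hneB (Walk.eq_of_length_eq_zero h0)
    -- the cycle
    set C : G.Walk x0 x0 := Walk.cons hx01 (B.append (Walk.cons hy01 A)) with hC
    have hCsupp : C.support = x0 :: (B.support ++ A.support) := by
      rw [hC, Walk.support_cons, Walk.support_append, Walk.support_cons]
      simp
    have hCedges : C.edges = s(x0, x1) :: (B.edges ++ (s(y0, y1) :: A.edges)) := by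
      rw [hC, Walk.edges_cons, Walk.edges_append, Walk.edges_cons]
    have hAe_sub : ∀ e ∈ A.edges, e ∈ C.edges := by
      intro e he; rw [hCedges]; simp [he]
    have hBe_sub : ∀ e ∈ B.edges, e ∈ C.edges := by
      intro e he; rw [hCedges]; simp [he]
    have he0_mem : s(x0, x1) ∈ C.edges := by rw [hCedges]; simp
    have he1_mem : s(y0, y1) ∈ C.edges := by rw [hCedges]; simp
    -- cycle proof
    have hcyc : C.IsCycle := by
      constructor
      · constructor
        · constructor
          rw [hCedges]
          refine List.nodup_cons.mpr ⟨?_, ?_⟩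
          · intro hmem
            rcases List.mem_append.mp hmem with h | h
            · exact hAB x0 hx0A (Walk.fst_mem_support_of_mem_edges B h)
            · rcases List.mem_cons.mp h with h | h
              · rcases Sym2.eq_iff.mp h with ⟨h1, h2⟩ | ⟨h1, h2⟩
                · exact hAB x0 hx0A (h1 ▸ hy0B)
                · exact hneA h1.symm
              · exact hAB x1 (Walk.fst_mem_support_of_mem_edges A (Sym2.eq_swap ▸ h)) hx1B
          · refine List.Nodup.append hBpath.isTrail.edges_nodup ?_ ?_
            · refine List.nodup_cons.mpr ⟨?_, hApath.isTrail.edges_nodup⟩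
              intro hmem
              exact hAB y0 (Walk.fst_mem_support_of_mem_edges A hmem) hy0B
            · intro e heB heA'
              rcases List.mem_cons.mp heA' with h | h
              · subst h
                exact hAB y1 hy1A (Walk.snd_mem_support_of_mem_edges B heB)
              · induction e using Sym2.inductionOn with
                | hf a b =>
                  exact hAB a (Walk.fst_mem_support_of_mem_edges A h)
                    (Walk.fst_mem_support_of_mem_edges B heB)
        · simp [hC]
      · rw [hCsupp]
        simp only [List.tail_cons]
        refine List.Nodup.append hBpath.support_nodup hApath.support_nodup ?_
        intro v hvB hvA
        exact hAB v hvA hvB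
    have hClen : 4 ≤ C.length := by
      rw [hC]
      rw [Walk.length_cons, Walk.length_append, Walk.length_cons]
      omega
    obtain ⟨u, w, hu, hw, huw, hchord⟩ := hch C hcyc hClen
    have humem : u ∈ A.support ∨ u ∈ B.support := by
      rw [hCsupp] at hu
      rcases List.mem_cons.mp hu with h | h
      · exact Or.inl (h ▸ hx0A)
      · rcases List.mem_append.mp h with h | h
        · exact Or.inr h
        · exact Or.inl h
    have hwmem : w ∈ A.support ∨ w ∈ B.support := by
      rw [hCsupp] at hw
      rcases List.mem_cons.mp hw with h | h
      · exact Or.inl (h ▸ hx0A)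
      · rcases List.mem_append.mp h with h | h
        · exact Or.inr h
        · exact Or.inl h
    -- mixed-case killer
    have key : ∀ a b : V, a ∈ A.support → b ∈ B.support → G.Adj a b →
        s(a, b) ∉ C.edges → False := by
      intro a b haA hbB hab hnc
      rcases hfree a haA with rfl | rfl | hfr
      · by_cases hD : s(a, b) ∈ Dset
        · have := harr0 b hD
          subst this
          exact hnc he0_mem
        · exact hsep ((hKadj hab hD).trans (hB b hbB).symm)
      · by_cases hD : s(a, b) ∈ Dset
        · have := harr1 b hD
          subst this
          rw [Sym2.eq_swap] at hnc
          exact hnc he1_mem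
        · exact hsep (((hA _ hy1A).trans (hKadj hab hD)).trans (hB b hbB).symm)
      · have hD : s(a, b) ∉ Dset := hfr b
        exact hsep (((hA a haA).trans (hKadj hab hD)).trans (hB b hbB).symm)
    rcases humem with huA | huB
    · rcases hwmem with hwA | hwB
      · -- shortcut A
        have hnA : s(u, w) ∉ A.edges := fun h => hchord (hAe_sub _ h)
        obtain ⟨Q, hQsup, hQlen⟩ := shortcut A huA hwA huw hnA
        refine ih Q.bypass B ?_ (Walk.bypass_isPath Q) hBpath ?_ hB ?_ hsep
        · have := Walk.length_bypass_le Q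
          omega
        · intro v hv
          exact hA v (hQsup v (Walk.support_bypass_subset Q hv))
        · intro v hv
          exact hfree v (hQsup v (Walk.support_bypass_subset Q hv))
      · exact key u w huA hwB huw hchord
    · rcases hwmem with hwA | hwB
      · exact key w u hwA huB huw.symm (by rwa [Sym2.eq_swap])
      · -- shortcut B
        have hnB : s(u, w) ∉ B.edges := fun h => hchord (hBe_sub _ h)
        obtain ⟨Q, hQsup, hQlen⟩ := shortcut B huB hwB huw hnB
        refine ih A Q.bypass ?_ hApath (Walk.bypass_isPath Q) hA ?_ hfree hsep
        · have := Walk.length_bypass_le Q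
          omega
        · intro v hv
          exact hB v (hQsup v (Walk.support_bypass_subset Q hv))


lemma mem_of_mem_edgesOf {l : List V} {a b : V} (h : s(a, b) ∈ edgesOf l) :
    a ∈ l ∧ b ∈ l := by
  obtain ⟨i, hi, he⟩ := h
  rcases Sym2.eq_iff.mp he with ⟨h1, h2⟩ | ⟨h1, h2⟩ <;>
    exact ⟨h1 ▸ List.get_mem _ _, h2 ▸ List.get_mem _ _⟩

lemma reachable_of_mem_support {H : SimpleGraph V} {a b v : V} (w : H.Walk a b)
    (hv : v ∈ w.support) : H.Reachable a v := by
  classical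
  exact ⟨w.takeUntil v hv⟩

lemma lift_reachable {H H' : SimpleGraph V}
    (h : ∀ a b : V, H'.Adj a b → H.Reachable a b) {u v : V}
    (hr : H'.Reachable u v) : H.Reachable u v := by
  obtain ⟨w⟩ := hr
  induction w with
  | nil => exact Reachable.refl _
  | cons ha _ ih => exact (h _ _ ha).trans ih

lemma lift_reachable2 {H H' : SimpleGraph V} {c d : V}
    (h : ∀ a b : V, H'.Adj a b →
      H.Reachable a b ∨ ((a = c ∧ b = d) ∨ (a = d ∧ b = c))) {u v : V}
    (hr : H'.Reachable u v) :
    H.Reachable u v ∨ H.Reachable u c ∨ H.Reachable u d := by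
  obtain ⟨w⟩ := hr
  induction w with
  | nil => exact Or.inl (Reachable.refl _)
  | cons ha _ ih =>
    rcases h _ _ ha with h1 | h1
    · rcases ih with h2 | h2 | h2
      · exact Or.inl (h1.trans h2)
      · exact Or.inr (Or.inl (h1.trans h2))
      · exact Or.inr (Or.inr (h1.trans h2))
    · rcases h1 with ⟨rfl, rfl⟩ | ⟨rfl, rfl⟩
      · exact Or.inr (Or.inl (Reachable.refl _))
      · exact Or.inr (Or.inr (Reachable.refl _))

lemma chain'_deleteEdges {H : SimpleGraph V} {Dset : Set (Sym2 V)} :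
    ∀ (l : List V), l.Chain' H.Adj →
      (∀ a b : V, a ∈ l → b ∈ l → s(a, b) ∉ Dset) →
      l.Chain' (H.deleteEdges Dset).Adj
  | [], _, _ => List.isChain_nil
  | [_], _, _ => by simp [List.Chain']
  | a :: b :: t, hch, hcond => by
    simp only [List.Chain', List.isChain_cons_cons] at hch ⊢
    refine ⟨(SimpleGraph.deleteEdges_adj).mpr
      ⟨hch.1, hcond a b (by simp) (by simp)⟩,
      chain'_deleteEdges (b :: t) hch.2 ?_⟩
    intro x y hx hy
    exact hcond x y (List.mem_cons_of_mem _ hx) (List.mem_cons_of_mem _ hy)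

lemma exists_walk_of_chain' {H : SimpleGraph V} :
    ∀ (l : List V) (hne : l ≠ []), l.Chain' H.Adj →
      ∃ w : H.Walk (l.head hne) (l.getLast hne), w.support = l
  | [], hne, _ => absurd rfl hne
  | [a], _, _ => ⟨Walk.nil, rfl⟩
  | a :: b :: t, _, hch => by
    simp only [List.Chain', List.isChain_cons_cons] at hch
    obtain ⟨w, hw⟩ := exists_walk_of_chain' (b :: t) (List.cons_ne_nil _ _) hch.2
    refine ⟨(Walk.cons hch.1 w).copy rfl (List.getLast_cons (List.cons_ne_nil _ _)).symm, ?_⟩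
    exact (Walk.support_copy ..).trans (congrArg (a :: ·) hw)

-- ===== end auxiliary =====

/-- If `r` is a normal separator path, every path from `S` to `T` visits at
least one inner vertex of `r`. -/
theorem normalSep_path_visits_inner
    {V : Type*} [Fintype V] (G : SimpleGraph V)
    (hconn : G.Connected) (hchordal : Chordal G)
    (S T : V) (hST : S ≠ T) (hnb : ∀ e : Sym2 V, ¬ G.IsBridge e)
    (w : Sym2 V → ℝ) (hw : EdgePos G w)
    (r : List V) (hr : NormalSep G w S T r)
    (p : List V) (hp : IsPathSeq G p)
    (hS : p.head? = some S) (hT : p.getLast? = some T) :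
    ∃ v : V, InnerMem r v ∧ v ∈ p := by
  classical
  obtain ⟨⟨⟨⟨hrne, hrchain⟩, hrnd⟩, hrsep, hrmin⟩, htrav, _huseful, hrlen⟩ := hr
  by_contra hcon
  push_neg at hcon
  have h0n : 0 < r.length := by omega
  have h1n : 1 < r.length := by omega
  have h2n : r.length - 2 < r.length := by omega
  have h3n : r.length - 1 < r.length := by omega
  set r0 : V := r.get ⟨0, h0n⟩ with hr0
  set r1 : V := r.get ⟨1, h1n⟩ with hr1
  set rn2 : V := r.get ⟨r.length - 2, h2n⟩ with hrn2
  set rn1 : V := r.get ⟨r.length - 1, h3n⟩ with hrn1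
  have hgetinj : ∀ (i j : ℕ) (hi : i < r.length) (hj : j < r.length),
      r.get ⟨i, hi⟩ = r.get ⟨j, hj⟩ → i = j := by
    intro i j hi hj h
    have h2 := (List.Nodup.get_inj_iff hrnd).mp h
    simpa using h2
  have hfin : ∀ {i j : ℕ} (hi : i < r.length) (hj : j < r.length), i = j →
      r.get ⟨i, hi⟩ = r.get ⟨j, hj⟩ := by
    intro i j hi hj h
    subst h
    rfl
  -- D-edge structure at the two endpoints
  have harr0 : ∀ z, s(r0, z) ∈ edgesOf r → z = r1 := by
    intro z hz
    obtain ⟨i, hi, he⟩ := hz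
    rcases Sym2.eq_iff.mp he with ⟨h1, h2⟩ | ⟨h1, h2⟩
    · have h0i : (0 : ℕ) = i := hgetinj _ _ _ _ h1
      rw [h2, hr1]
      exact (hfin _ _ (by omega)).symm
    · have := hgetinj _ _ _ _ h1
      omega
  have harr1 : ∀ z, s(rn1, z) ∈ edgesOf r → z = rn2 := by
    intro z hz
    obtain ⟨i, hi, he⟩ := hz
    rcases Sym2.eq_iff.mp he with ⟨h1, h2⟩ | ⟨h1, h2⟩
    · have := hgetinj _ _ _ _ h1
      omega
    · have : (r.length - 1 : ℕ) = i + 1 := hgetinj _ _ _ _ h1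
      rw [h2, hrn2]
      exact (hfin _ _ (by omega)).symm
  have hDboth : ∀ a b : V, s(a, b) ∈ edgesOf r → a ∈ r ∧ b ∈ r := by
    intro a b h
    exact mem_of_mem_edgesOf h
  have hDirr : ∀ a : V, s(a, a) ∉ edgesOf r := by
    intro a ha
    obtain ⟨i, hi, he⟩ := ha
    rcases Sym2.eq_iff.mp he with ⟨h1, h2⟩ | ⟨h1, h2⟩ <;>
    · have := hgetinj _ _ _ _ (h1.symm.trans h2)
      omega
  -- minimality: drop the first vertex
  have hq1 : (G.deleteEdges (edgesOf (r.drop 1))).Connected := by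
    have hcs : ContigSub (r.drop 1) r := by
      refine ⟨1, r.length - 1, by omega, by omega, ?_⟩
      unfold subseq
      have hh : r.length - 1 + 1 = r.length := by omega
      rw [hh, List.take_length]
    have hne' : r.drop 1 ≠ r := by
      intro h
      have := congrArg List.length h
      rw [List.length_drop] at this
      omega
    have := hrmin _ hcs hne'
    unfold SeparatingPath Separating at this
    exact not_not.mp this
  -- minimality: drop the last vertex
  have hq2 : (G.deleteEdges (edgesOf (r.take (r.length - 1)))).Connected := by
    have hcs : ContigSub (r.take (r.length - 1)) r := by
      refine ⟨0, r.length - 2, by omega, by omega, ?_⟩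
      unfold subseq
      have hh : r.length - 2 + 1 = r.length - 1 := by omega
      rw [hh, List.drop_zero]
    have hne' : r.take (r.length - 1) ≠ r := by
      intro h
      have := congrArg List.length h
      rw [List.length_take] at this
      omega
    have := hrmin _ hcs hne'
    unfold SeparatingPath Separating at this
    exact not_not.mp this
  -- identify the borderline edges
  have hfirst : ∀ e ∈ edgesOf r, e ∉ edgesOf (r.drop 1) → e = s(r0, r1) := by
    intro e he hnot
    obtain ⟨i, hi, rfl⟩ := he
    by_cases h0 : i = 0
    · subst h0
      rfl
    · exfalso
      apply hnot
      have hb1 : i - 1 + 1 < (r.drop 1).length := by rw [List.length_drop]; omega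
      have hb2 : i - 1 < (r.drop 1).length := by omega
      refine ⟨i - 1, hb1, ?_⟩
      have e1 : (r.drop 1).get ⟨i - 1, hb2⟩
          = r.get ⟨i, by omega⟩ := by
        simp only [List.get_eq_getElem, List.getElem_drop]
        exact hfin _ _ (by omega)
      have e2 : (r.drop 1).get ⟨i - 1 + 1, hb1⟩
          = r.get ⟨i + 1, hi⟩ := by
        simp only [List.get_eq_getElem, List.getElem_drop]
        exact hfin _ _ (by omega)
      rw [e1, e2]
  have hlast : ∀ e ∈ edgesOf r, e ∉ edgesOf (r.take (r.length - 1)) → e = s(rn2, rn1) := by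
    intro e he hnot
    obtain ⟨i, hi, rfl⟩ := he
    by_cases h0 : i + 1 = r.length - 1
    · have e1 : r.get ⟨i, by omega⟩ = rn2 := hfin _ _ (by omega)
      have e2 : r.get ⟨i + 1, hi⟩ = rn1 := hfin _ _ (by omega)
      rw [e1, e2]
    · exfalso
      apply hnot
      have hlt : i + 1 < r.length - 1 := by omega
      have hb1 : i + 1 < (r.take (r.length - 1)).length := by rw [List.length_take]; omega
      have hb2 : i < (r.take (r.length - 1)).length := by omega
      refine ⟨i, hb1, ?_⟩
      have e1 : (r.take (r.length - 1)).get ⟨i, hb2⟩ = r.get ⟨i, by omega⟩ :=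
        by simp
      have e2 : (r.take (r.length - 1)).get ⟨i + 1, hb1⟩ = r.get ⟨i + 1, hi⟩ :=
        by simp
      rw [e1, e2]
  -- K-unreachability of the two end pairs
  have h1 : ¬ (G.deleteEdges (edgesOf r)).Reachable r0 r1 := by
    intro hreach
    apply hrsep
    haveI := hconn.nonempty
    refine ⟨fun u v => ?_⟩
    refine lift_reachable ?_ (hq1.preconnected u v)
    intro a b hab
    rw [SimpleGraph.deleteEdges_adj] at hab
    by_cases hD : s(a, b) ∈ edgesOf r
    · rcases Sym2.eq_iff.mp (hfirst _ hD hab.2) with ⟨rfl, rfl⟩ | ⟨rfl, rfl⟩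
      · exact hreach
      · exact hreach.symm
    · exact SimpleGraph.Adj.reachable ((SimpleGraph.deleteEdges_adj).mpr ⟨hab.1, hD⟩)
  have h2 : ¬ (G.deleteEdges (edgesOf r)).Reachable rn2 rn1 := by
    intro hreach
    apply hrsep
    haveI := hconn.nonempty
    refine ⟨fun u v => ?_⟩
    refine lift_reachable ?_ (hq2.preconnected u v)
    intro a b hab
    rw [SimpleGraph.deleteEdges_adj] at hab
    by_cases hD : s(a, b) ∈ edgesOf r
    · rcases Sym2.eq_iff.mp (hlast _ hD hab.2) with ⟨rfl, rfl⟩ | ⟨rfl, rfl⟩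
      · exact hreach
      · exact hreach.symm
    · exact SimpleGraph.Adj.reachable ((SimpleGraph.deleteEdges_adj).mpr ⟨hab.1, hD⟩)
  -- two-sidedness
  have claim2 : ∀ v : V, (G.deleteEdges (edgesOf r)).Reachable v rn2 ∨
      (G.deleteEdges (edgesOf r)).Reachable v rn1 := by
    intro v
    have hpre := hq2.preconnected v rn2
    have hfun : ∀ a b : V, (G.deleteEdges (edgesOf (r.take (r.length - 1)))).Adj a b →
        (G.deleteEdges (edgesOf r)).Reachable a b ∨
        ((a = rn2 ∧ b = rn1) ∨ (a = rn1 ∧ b = rn2)) := by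
      intro a b hab
      rw [SimpleGraph.deleteEdges_adj] at hab
      by_cases hD : s(a, b) ∈ edgesOf r
      · rcases Sym2.eq_iff.mp (hlast _ hD hab.2) with ⟨ha, hb⟩ | ⟨ha, hb⟩
        · exact Or.inr (Or.inl ⟨ha, hb⟩)
        · exact Or.inr (Or.inr ⟨ha, hb⟩)
      · exact Or.inl (SimpleGraph.Adj.reachable ((SimpleGraph.deleteEdges_adj).mpr ⟨hab.1, hD⟩))
    rcases lift_reachable2 hfun hpre with h | h | h
    · exact Or.inl h
    · exact Or.inl h
    · exact Or.inr h
  have hfinL : ∀ (l : List V) (i j : ℕ) (hi : i < l.length) (hj : j < l.length), i = j →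
      l.get ⟨i, hi⟩ = l.get ⟨j, hj⟩ := by
    intro l i j hi hj h
    subst h
    rfl
  -- p avoids inner vertices of r
  have hinner : ∀ v : V, v ∈ p → v ∈ r → v = r0 ∨ v = rn1 := by
    intro v hvp hvr
    obtain ⟨⟨i, hi⟩, hgi⟩ := List.mem_iff_get.mp hvr
    by_cases hz : i = 0
    · subst hz
      exact Or.inl hgi.symm
    · by_cases hl : i = r.length - 1
      · refine Or.inr (hgi.symm.trans ?_)
        exact hfinL _ _ _ _ _ (by omega)
      · exact absurd hvp (hcon v ⟨i, hi, by omega, by omega, hgi⟩)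
  -- unpack traversability
  obtain ⟨p0, ⟨⟨hp0ne, hp0ch⟩, hp0nd⟩, hp0h, hp0l, i0, j0, hij, hjlt, hsubeq⟩ := htrav
  have hLn : r.length = min (j0 + 1) p0.length - i0 := by
    have h := congrArg List.length hsubeq
    unfold subseq at h
    rwa [List.length_drop, List.length_take] at h
  have hrget : ∀ (k : ℕ) (hk : k < r.length) (hik : i0 + k < p0.length),
      r.get ⟨k, hk⟩ = p0.get ⟨i0 + k, hik⟩ := by
    intro k hk hik
    have hk' : k < (subseq p0 i0 j0).length := by rw [← hsubeq]; exact hk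
    have e0 : r.get ⟨k, hk⟩ = (subseq p0 i0 j0).get ⟨k, hk'⟩ := List.get_of_eq hsubeq _
    rw [e0]
    show ((p0.take (j0 + 1)).drop i0).get ⟨k, _⟩ = _
    simp
  have hS0 : p0.head hp0ne = S := by
    have h := List.head?_eq_head hp0ne
    exact Option.some.inj (h.symm.trans hp0h)
  have hT0 : p0.getLast hp0ne = T := by
    have h := List.getLast?_eq_getLast hp0ne
    exact Option.some.inj (h.symm.trans hp0l)
  obtain ⟨hpne, hpch⟩ := hp
  have hpS : p.head hpne = S := by
    have h := List.head?_eq_head hpne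
    exact Option.some.inj (h.symm.trans hS)
  have hpT : p.getLast hpne = T := by
    have h := List.getLast?_eq_getLast hpne
    exact Option.some.inj (h.symm.trans hT)
  have hp0inj : ∀ (i j : ℕ) (hi : i < p0.length) (hj : j < p0.length),
      p0.get ⟨i, hi⟩ = p0.get ⟨j, hj⟩ → i = j := by
    intro i j hi hj h
    have h2 := (List.Nodup.get_inj_iff hp0nd).mp h
    simpa using h2
  -- the prefix
  have hP1len : (p0.take (i0 + 1)).length = i0 + 1 := by rw [List.length_take]; omega
  have hP1ne : p0.take (i0 + 1) ≠ [] := by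
    intro h
    have := congrArg List.length h
    rw [hP1len] at this
    simp at this
  have hP1get : ∀ (k : ℕ) (hk : k < i0 + 1) (hk2 : k < p0.length),
      (p0.take (i0 + 1)).get ⟨k, by omega⟩ = p0.get ⟨k, hk2⟩ :=
    fun k hk hk2 => by simp
  have hP1head : (p0.take (i0 + 1)).head hP1ne = S := by
    have e0 := List.get_mk_zero (show 0 < (p0.take (i0 + 1)).length by omega)
    rw [← e0, hP1get 0 (by omega) (by omega), ← hS0]
    exact List.get_mk_zero _
  have hP1last : (p0.take (i0 + 1)).getLast hP1ne = r0 := by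
    rw [List.getLast_eq_getElem]
    change (p0.take (i0 + 1)).get ⟨(p0.take (i0 + 1)).length - 1, _⟩ = _
    have e1 : (p0.take (i0 + 1)).get ⟨(p0.take (i0 + 1)).length - 1, by omega⟩
        = (p0.take (i0 + 1)).get ⟨i0, by omega⟩ := hfinL _ _ _ _ _ (by omega)
    rw [e1, hP1get i0 (by omega) (by omega), hr0, hrget 0 (by omega) (by omega)]
    exact hfinL p0 _ _ _ _ (by omega)
  have hP1ch : (p0.take (i0 + 1)).Chain' G.Adj := hp0ch.prefix (List.take_prefix _ _)
  have hP1r : ∀ v, v ∈ p0.take (i0 + 1) → v ∈ r → v = r0 := by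
    intro v hv hvr
    obtain ⟨⟨k, hk⟩, hkv⟩ := List.mem_iff_get.mp hv
    obtain ⟨⟨l, hl⟩, hlv⟩ := List.mem_iff_get.mp hvr
    have hk1 : k < i0 + 1 := by omega
    have hv1 : v = p0.get ⟨k, by omega⟩ := by
      rw [← hkv]
      exact hP1get k hk1 (by omega)
    have hv2 : v = p0.get ⟨i0 + l, by omega⟩ := by
      rw [← hlv]
      exact hrget l hl (by omega)
    have hkl : k = i0 + l := hp0inj _ _ _ _ (hv1.symm.trans hv2)
    have hl0 : l = 0 := by omega
    subst hl0
    exact hlv.symm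
  -- the suffix
  have hP2len : (p0.drop j0).length = p0.length - j0 := List.length_drop
  have hP2ne : p0.drop j0 ≠ [] := by
    intro h
    have := congrArg List.length h
    rw [hP2len] at this
    simp at this
    omega
  have hP2get : ∀ (k : ℕ) (hk2 : j0 + k < p0.length),
      (p0.drop j0).get ⟨k, by omega⟩ = p0.get ⟨j0 + k, hk2⟩ :=
    fun k hk2 => by simp
  have hP2head : (p0.drop j0).head hP2ne = rn1 := by
    have e0 := List.get_mk_zero (show 0 < (p0.drop j0).length by omega)
    rw [← e0, hP2get 0 (by omega), hrn1, hrget (r.length - 1) (by omega) (by omega)]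
    exact hfinL p0 _ _ _ _ (by omega)
  have hP2last : (p0.drop j0).getLast hP2ne = T := by
    rw [List.getLast_eq_getElem, ← hT0, List.getLast_eq_getElem]
    change (p0.drop j0).get ⟨(p0.drop j0).length - 1, _⟩ = p0.get ⟨p0.length - 1, _⟩
    have e1 : (p0.drop j0).get ⟨(p0.drop j0).length - 1, by omega⟩
        = p0.get ⟨j0 + ((p0.drop j0).length - 1), by omega⟩ := hP2get _ (by omega)
    rw [e1]
    exact hfinL p0 _ _ _ _ (by omega)
  have hP2ch : (p0.drop j0).Chain' G.Adj := hp0ch.suffix (List.drop_suffix _ _)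
  have hP2r : ∀ v, v ∈ p0.drop j0 → v ∈ r → v = rn1 := by
    intro v hv hvr
    obtain ⟨⟨k, hk⟩, hkv⟩ := List.mem_iff_get.mp hv
    obtain ⟨⟨l, hl⟩, hlv⟩ := List.mem_iff_get.mp hvr
    have hv1 : v = p0.get ⟨j0 + k, by omega⟩ := by
      rw [← hkv]
      exact hP2get k (by omega)
    have hv2 : v = p0.get ⟨i0 + l, by omega⟩ := by
      rw [← hlv]
      exact hrget l hl (by omega)
    have hkl : j0 + k = i0 + l := hp0inj _ _ _ _ (hv1.symm.trans hv2)
    have hl0 : l = r.length - 1 := by omega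
    subst hl0
    refine (hlv.symm).trans ?_
    exact hfinL _ _ _ _ _ rfl
  -- edge conditions
  have hpcond : ∀ a b : V, a ∈ p → b ∈ p → s(a, b) ∉ edgesOf r := by
    intro a b ha hb hD
    obtain ⟨haR, hbR⟩ := hDboth _ _ hD
    rcases hinner a ha haR with rfl | rfl <;> rcases hinner b hb hbR with rfl | rfl
    · exact hDirr _ hD
    · have h := harr0 _ hD
      have := hgetinj _ _ _ _ (show r.get ⟨r.length - 1, h3n⟩ = r.get ⟨1, h1n⟩ from h)
      omega
    · have h := harr1 _ hD
      have := hgetinj _ _ _ _ (show r.get ⟨0, h0n⟩ = r.get ⟨r.length - 2, h2n⟩ from h)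
      omega
    · exact hDirr _ hD
  have hP1cond : ∀ a b : V, a ∈ p0.take (i0 + 1) → b ∈ p0.take (i0 + 1) →
      s(a, b) ∉ edgesOf r := by
    intro a b ha hb hD
    obtain ⟨haR, hbR⟩ := hDboth _ _ hD
    rw [hP1r a ha haR, hP1r b hb hbR] at hD
    exact hDirr _ hD
  have hP2cond : ∀ a b : V, a ∈ p0.drop j0 → b ∈ p0.drop j0 →
      s(a, b) ∉ edgesOf r := by
    intro a b ha hb hD
    obtain ⟨haR, hbR⟩ := hDboth _ _ hD
    rw [hP2r a ha haR, hP2r b hb hbR] at hD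
    exact hDirr _ hD
  -- build the K-walks
  obtain ⟨W1, hW1s⟩ := exists_walk_of_chain' (H := G.deleteEdges (edgesOf r)) _ hP1ne
    (chain'_deleteEdges _ hP1ch hP1cond)
  obtain ⟨Wp, hWps⟩ := exists_walk_of_chain' (H := G.deleteEdges (edgesOf r)) _ hpne
    (chain'_deleteEdges _ hpch hpcond)
  obtain ⟨W2, hW2s⟩ := exists_walk_of_chain' (H := G.deleteEdges (edgesOf r)) _ hP2ne
    (chain'_deleteEdges _ hP2ch hP2cond)
  set WA0 : (G.deleteEdges (edgesOf r)).Walk r0 rn1 :=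
    ((W1.copy hP1head hP1last).reverse).append
      (((Wp.copy hpS hpT)).append ((W2.copy hP2head hP2last).reverse)) with hWA0def
  have hWA0mem : ∀ v ∈ WA0.support,
      v ∈ p0.take (i0 + 1) ∨ v ∈ p ∨ v ∈ p0.drop j0 := by
    intro v hv
    rw [hWA0def] at hv
    rw [Walk.support_append] at hv
    rcases List.mem_append.mp hv with h | h
    · rw [Walk.support_reverse, List.mem_reverse, Walk.support_copy, hW1s] at h
      exact Or.inl h
    · have h' := List.mem_of_mem_tail h
      rw [Walk.support_append] at h'
      rcases List.mem_append.mp h' with h2 | h2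
      · rw [Walk.support_copy, hWps] at h2
        exact Or.inr (Or.inl h2)
      · have h3 := List.mem_of_mem_tail h2
        rw [Walk.support_reverse, List.mem_reverse, Walk.support_copy, hW2s] at h3
        exact Or.inr (Or.inr h3)
  set A1 := WA0.bypass with hA1
  have hA1path : A1.IsPath := Walk.bypass_isPath WA0
  have hreach0n1 : (G.deleteEdges (edgesOf r)).Reachable r0 rn1 := ⟨A1⟩
  have hBreach : (G.deleteEdges (edgesOf r)).Reachable r1 rn2 := by
    rcases claim2 r1 with h | h
    · exact h
    · exact absurd (h.trans hreach0n1.symm).symm h1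
  obtain ⟨WB0⟩ := hBreach
  set B1 := WB0.bypass with hB1
  have hB1path : B1.IsPath := Walk.bypass_isPath WB0
  -- transfer to G
  have hKle : ∀ {x y : V} (Wk : (G.deleteEdges (edgesOf r)).Walk x y), ∀ e ∈ Wk.edges, e ∈ G.edgeSet := by
    intro x y Wk e he
    have h1 : e ∈ (G.deleteEdges (edgesOf r)).edgeSet := Wk.edges_subset_edgeSet he
    exact SimpleGraph.edgeSet_mono (SimpleGraph.deleteEdges_le _) h1
  set A : G.Walk rn1 r0 := (A1.reverse).transfer G (hKle A1.reverse) with hA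
  set B : G.Walk r1 rn2 := B1.transfer G (hKle B1) with hB
  have hApath : A.IsPath := by
    rw [hA]
    exact (hA1path.reverse).transfer _
  have hBpath : B.IsPath := by
    rw [hB]
    exact hB1path.transfer _
  have hAsup : ∀ v ∈ A.support, v ∈ A1.support := by
    intro v hv
    rw [hA, Walk.support_transfer, Walk.support_reverse, List.mem_reverse] at hv
    exact hv
  have hAreach : ∀ v ∈ A.support, (G.deleteEdges (edgesOf r)).Reachable r0 v := by
    intro v hv
    exact reachable_of_mem_support A1 (hAsup v hv)
  have hBreach' : ∀ v ∈ B.support, (G.deleteEdges (edgesOf r)).Reachable r1 v := by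
    intro v hv
    rw [hB, Walk.support_transfer] at hv
    exact reachable_of_mem_support B1 hv
  have hfreeA : ∀ v ∈ A.support, v = r0 ∨ v = rn1 ∨ ∀ z, s(v, z) ∉ edgesOf r := by
    intro v hv
    by_cases hvr : v ∈ r
    · have h3 := hWA0mem v (Walk.support_bypass_subset WA0 (hAsup v hv))
      rcases h3 with h | h | h
      · exact Or.inl (hP1r v h hvr)
      · rcases hinner v h hvr with h' | h'
        · exact Or.inl h'
        · exact Or.inr (Or.inl h')
      · exact Or.inr (Or.inl (hP2r v h hvr))
    · refine Or.inr (Or.inr ?_)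
      intro z hz
      exact hvr (hDboth _ _ hz).1
  -- the two adjacencies and distinctness facts
  have hadj01 : G.Adj r0 r1 := by
    have h := List.isChain_iff_getElem.mp hrchain 0 (by omega)
    exact h
  have hadjn : G.Adj rn2 rn1 := by
    have h : G.Adj (r.get ⟨r.length - 2, by omega⟩) (r.get ⟨r.length - 2 + 1, by omega⟩) :=
      List.isChain_iff_getElem.mp hrchain (r.length - 2) (by omega)
    have e2 : r.get ⟨r.length - 2 + 1, by omega⟩ = rn1 := hfinL _ _ _ _ _ (by omega)
    rw [e2] at h
    exact h
  have hne1 : rn1 ≠ r0 := by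
    intro h
    have := hgetinj _ _ _ _ (show r.get ⟨r.length - 1, h3n⟩ = r.get ⟨0, h0n⟩ from h)
    omega
  have hne2 : r1 ≠ rn2 := by
    intro h
    have := hgetinj _ _ _ _ (show r.get ⟨1, h1n⟩ = r.get ⟨r.length - 2, h2n⟩ from h)
    omega
  exact omega1 hchordal (edgesOf r) hadj01 hadjn harr0 harr1 hne1 hne2
    (A.length + B.length) A B le_rfl hApath hBpath hAreach hBreach' hfreeA h1


end NSP
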